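/- For E ⊆ ℝ, E is Borel if and only if E' = {(x,y) : x + y ∈ E} is in the σ-algebra generated by rectangles A × B with A, B ⊆ ℝ Lebesgue measurable. -/

import Mathlib

open MeasureTheory Set

/-- The σ-algebra of Lebesgue (null-)measurable sets on ℝ, as a `MeasurableSpace`. -/
def mNull : MeasurableSpace ℝ where
  MeasurableSet' s := NullMeasurableSet s (volume : Measure ℝ)
  measurableSet_empty := MeasureTheory.nullMeasurableSet_empty
  measurableSet_compl _ h := h.compl
  measurableSet_iUnion _ h := NullMeasurableSet.iUnion h

theorem stmt_5 (E : Set ℝ) :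
    MeasurableSet E ↔
      MeasurableSet[MeasurableSpace.generateFrom
        {R : Set (ℝ × ℝ) | ∃ (A B : Set ℝ),
          NullMeasurableSet A (volume : Measure ℝ) ∧
          NullMeasurableSet B (volume : Measure ℝ) ∧ R = A ×ˢ B}]
        {p : ℝ × ℝ | p.1 + p.2 ∈ E} := by
  set 𝒞 : Set (Set (ℝ × ℝ)) := {R : Set (ℝ × ℝ) | ∃ (A B : Set ℝ),
      NullMeasurableSet A (volume : Measure ℝ) ∧
      NullMeasurableSet B (volume : Measure ℝ) ∧ R = A ×ˢ B} with h𝒞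
  constructor
  · -- forward direction
    intro hE
    have hfst : Measurable[MeasurableSpace.generateFrom 𝒞] (Prod.fst : ℝ × ℝ → ℝ) := by
      intro A hA
      refine MeasurableSpace.measurableSet_generateFrom
        ⟨A, univ, hA.nullMeasurableSet, MeasurableSet.univ.nullMeasurableSet, ?_⟩
      rw [Set.prod_univ]
    have hsnd : Measurable[MeasurableSpace.generateFrom 𝒞] (Prod.snd : ℝ × ℝ → ℝ) := by
      intro B hB
      refine MeasurableSpace.measurableSet_generateFrom
        ⟨univ, B, MeasurableSet.univ.nullMeasurableSet, hB.nullMeasurableSet, ?_⟩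
      rw [Set.univ_prod]
    have hadd : Measurable[MeasurableSpace.generateFrom 𝒞]
        (fun p : ℝ × ℝ => p.1 + p.2) := hfst.add hsnd
    exact hadd hE
  · -- backward direction
    intro h
    classical
    -- the preimage of a generated-measurable set under `x ↦ (x, t - x)` is Lebesgue measurable
    have claim1 : ∀ (t : ℝ) (S : Set (ℝ × ℝ)), MeasurableSet[MeasurableSpace.generateFrom 𝒞] S →
        NullMeasurableSet ((fun x : ℝ => (x, t - x)) ⁻¹' S) volume := by
      intro t
      have hle : MeasurableSpace.generateFrom 𝒞 ≤
          MeasurableSpace.map (fun x : ℝ => (x, t - x)) mNull := by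
        refine MeasurableSpace.generateFrom_le ?_
        rintro _ ⟨A, B, hA, hB, rfl⟩
        show NullMeasurableSet ((fun x : ℝ => (x, t - x)) ⁻¹' (A ×ˢ B)) volume
        have hpre : (fun x : ℝ => (x, t - x)) ⁻¹' (A ×ˢ B) = A ∩ (fun x : ℝ => t - x) ⁻¹' B := by
          ext x; simp [Set.mem_prod]
        rw [hpre]
        exact hA.inter (hB.preimage
          (Measure.measurePreserving_sub_left volume t).quasiMeasurePreserving)
      intro S hS
      exact hle S hS
    have hpi : IsPiSystem 𝒞 := by
      rintro _ ⟨A, B, hA, hB, rfl⟩ _ ⟨A', B', hA', hB', rfl⟩ -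
      exact ⟨A ∩ A', B ∩ B', hA.inter hA', hB.inter hB', Set.prod_inter_prod⟩
    -- key : the function t ↦ volume ((x,t-x)⁻¹ S ∩ [0,1]) is Borel measurable
    have key : ∀ S : Set (ℝ × ℝ), MeasurableSet[MeasurableSpace.generateFrom 𝒞] S →
        Measurable (fun t : ℝ =>
          volume ((fun x : ℝ => (x, t - x)) ⁻¹' S ∩ Icc (0:ℝ) 1)) := by
      refine MeasurableSpace.induction_on_inter (α := ℝ × ℝ)
        (C := fun S _ => Measurable (fun t : ℝ =>
          volume ((fun x : ℝ => (x, t - x)) ⁻¹' S ∩ Icc (0:ℝ) 1)))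
        (s := 𝒞) (m := MeasurableSpace.generateFrom 𝒞) rfl hpi ?_ ?_ ?_ ?_
      · -- empty
        simp only [preimage_empty, empty_inter, measure_empty]; exact measurable_const
      · -- basic rectangles
        rintro _ ⟨A, B, hA, hB, rfl⟩
        obtain ⟨A', hA'm, hAae⟩ := hA
        obtain ⟨B', hB'm, hBae⟩ := hB
        have hBae' : ∀ t : ℝ,
            (fun x : ℝ => t - x) ⁻¹' B =ᵐ[volume] (fun x : ℝ => t - x) ⁻¹' B' := fun t =>
          (Measure.measurePreserving_sub_left volume t).quasiMeasurePreserving.preimage_ae_eq hBae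
        set W : Set (ℝ × ℝ) := {p : ℝ × ℝ | (p.2 ∈ A' ∧ p.1 - p.2 ∈ B') ∧ p.2 ∈ Icc (0:ℝ) 1}
          with hW
        have hWm : MeasurableSet W := by
          refine (((measurable_snd hA'm).inter
            ((measurable_fst.sub measurable_snd) hB'm)).inter (measurable_snd measurableSet_Icc))
        have hsec : ∀ t : ℝ, Prod.mk t ⁻¹' W =
            (A' ∩ (fun x : ℝ => t - x) ⁻¹' B') ∩ Icc (0:ℝ) 1 := by
          intro t; ext x
          simp only [hW, mem_preimage, mem_setOf_eq, mem_inter_iff]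
        have heq : (fun t : ℝ =>
            volume ((fun x : ℝ => (x, t - x)) ⁻¹' (A ×ˢ B) ∩ Icc (0:ℝ) 1)) =
            fun t => volume (Prod.mk t ⁻¹' W) := by
          funext t
          rw [hsec t]
          have h1 : (fun x : ℝ => (x, t - x)) ⁻¹' (A ×ˢ B) =
              A ∩ (fun x : ℝ => t - x) ⁻¹' B := by
            ext x; simp [Set.mem_prod]
          rw [h1]
          exact measure_congr (((hAae.inter (hBae' t)).inter Filter.EventuallyEq.rfl))
        rw [heq]
        exact measurable_measure_prodMk_left hWm
      · -- complements
        intro S hS hC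
        have h1 : (fun t : ℝ =>
            volume ((fun x : ℝ => (x, t - x)) ⁻¹' Sᶜ ∩ Icc (0:ℝ) 1)) =
            fun t => 1 - volume ((fun x : ℝ => (x, t - x)) ⁻¹' S ∩ Icc (0:ℝ) 1) := by
          funext t
          have hnm : NullMeasurableSet
              ((fun x : ℝ => (x, t - x)) ⁻¹' S ∩ Icc (0:ℝ) 1) volume :=
            (claim1 t S hS).inter measurableSet_Icc.nullMeasurableSet
          have hfin : volume ((fun x : ℝ => (x, t - x)) ⁻¹' S ∩ Icc (0:ℝ) 1) ≠ ⊤ := by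
            refine ne_of_lt (lt_of_le_of_lt (measure_mono inter_subset_right) ?_)
            simp [Real.volume_Icc]
          have hd := measure_diff (inter_subset_right :
            (fun x : ℝ => (x, t - x)) ⁻¹' S ∩ Icc (0:ℝ) 1 ⊆ Icc (0:ℝ) 1) hnm hfin
          have hset : Icc (0:ℝ) 1 \ ((fun x : ℝ => (x, t - x)) ⁻¹' S ∩ Icc (0:ℝ) 1) =
              (fun x : ℝ => (x, t - x)) ⁻¹' Sᶜ ∩ Icc (0:ℝ) 1 := by
            ext x
            simp only [mem_diff, mem_inter_iff, mem_preimage, mem_compl_iff, not_and]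
            tauto
          rw [hset] at hd
          rw [hd, Real.volume_Icc]
          norm_num
        rw [h1]
        exact measurable_const.sub hC
      · -- disjoint unions
        intro f hdisj hmeas hC
        have h1 : (fun t : ℝ =>
            volume ((fun x : ℝ => (x, t - x)) ⁻¹' (⋃ i, f i) ∩ Icc (0:ℝ) 1)) =
            fun t => ∑' i, volume ((fun x : ℝ => (x, t - x)) ⁻¹' (f i) ∩ Icc (0:ℝ) 1) := by
          funext t
          rw [preimage_iUnion, iUnion_inter]
          refine measure_iUnion₀ ?_ ?_
          · intro i j hij
            exact (((hdisj hij).preimage _).mono inter_subset_left inter_subset_left).aedisjoint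
          · exact fun i => (claim1 t _ (hmeas i)).inter measurableSet_Icc.nullMeasurableSet
        rw [h1]
        exact Measurable.ennreal_tsum hC
    have hkey := key _ h
    have hval : ∀ t : ℝ,
        volume ((fun x : ℝ => (x, t - x)) ⁻¹' {p : ℝ × ℝ | p.1 + p.2 ∈ E} ∩ Icc (0:ℝ) 1) =
          if t ∈ E then 1 else 0 := by
      intro t
      by_cases ht : t ∈ E
      · have : (fun x : ℝ => (x, t - x)) ⁻¹' {p : ℝ × ℝ | p.1 + p.2 ∈ E} = univ := by
          ext x
          simp only [mem_preimage, mem_setOf_eq, mem_univ, iff_true]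
          rwa [show x + (t - x) = t by ring]
        rw [this, univ_inter, Real.volume_Icc, if_pos ht]
        norm_num
      · have : (fun x : ℝ => (x, t - x)) ⁻¹' {p : ℝ × ℝ | p.1 + p.2 ∈ E} = ∅ := by
          ext x
          simp only [mem_preimage, mem_setOf_eq, mem_empty_iff_false, iff_false]
          rwa [show x + (t - x) = t by ring]
        rw [this, empty_inter, measure_empty, if_neg ht]
    have hEeq : E = (fun t : ℝ =>
        volume ((fun x : ℝ => (x, t - x)) ⁻¹' {p : ℝ × ℝ | p.1 + p.2 ∈ E} ∩ Icc (0:ℝ) 1)) ⁻¹'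
          {1} := by
      ext t
      simp only [mem_preimage, mem_singleton_iff, hval t]
      by_cases ht : t ∈ E <;> simp [ht]
    rw [hEeq]
    exact hkey (measurableSet_singleton 1)
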